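/- Let b, r₀ ∈ ℝ with b ≠ 0, and let α, β, γ : ℝ → ℝ be differentiable functions satisfying at every s ∈ ℝ: β' = 2αβ, γ' = −2αγ, α' = b(γ − β), and α² + b(γ + β) = r₀. Then α is twice differentiable and satisfies α'' = −2α(r₀ − α²) at every point. -/

import Mathlib

/-- The one-gap (N = 1) stationary flow of the mKdV hierarchy
`β' = 2αβ`, `γ' = −2αγ`, `α' = b(γ − β)` together with the orbit constraint
`α² + b(γ + β) = r₀` implies that `α` is twice differentiable with
`α'' = −2α(r₀ − α²)`. -/
theorem one_gap_stationary_ODE (b r₀ : ℝ) (hb : b ≠ 0)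
    (α β γ : ℝ → ℝ)
    (hα : Differentiable ℝ α) (hβ : Differentiable ℝ β) (hγ : Differentiable ℝ γ)
    (h1 : ∀ s : ℝ, deriv β s = 2 * α s * β s)
    (h2 : ∀ s : ℝ, deriv γ s = -2 * α s * γ s)
    (h3 : ∀ s : ℝ, deriv α s = b * (γ s - β s))
    (h4 : ∀ s : ℝ, (α s) ^ 2 + b * (γ s + β s) = r₀) :
    Differentiable ℝ (deriv α) ∧
    ∀ s : ℝ, deriv (deriv α) s = -2 * α s * (r₀ - (α s) ^ 2) := by
  have heq : deriv α = fun s => b * (γ s - β s) := funext h3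
  have hdiff : Differentiable ℝ (fun s => b * (γ s - β s)) :=
    (hγ.sub hβ).const_mul b
  refine ⟨heq ▸ hdiff, fun s => ?_⟩
  rw [heq]
  have : deriv (fun s => b * (γ s - β s)) s
      = b * (deriv γ s - deriv β s) := by
    rw [deriv_const_mul (d := fun y => γ y - β y) _ ((hγ.sub hβ) s), deriv_fun_sub (hγ s) (hβ s)]
  rw [this, h1, h2]
  have h4s := h4 s
  linear_combination (-2 * α s) * h4s
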